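/- Let C be a bounded self-adjoint operator on a complex Hilbert space and T = A + iB (Cartesian decomposition) a bounded operator with T² = C. If σ(B) ∩ σ(-B) = ∅, then T is skew-adjoint (T* = -T) and invertible (in fact T = iB). -/

import Mathlib

set_option synthInstance.maxHeartbeats 1000000
set_option maxHeartbeats 1000000

section Aux

variable {H : Type*} [NormedAddCommGroup H] [InnerProductSpace ℂ H] [CompleteSpace H]

/-- If `A` intertwines `B` and `-B` and the real spectra of `B` and `-B` are disjoint,
then `A = 0`.  (Rosenblum-type corollary via continuous functional calculus.) -/
lemma aux_eq_zero_of_intertwine (A B : H →L[ℂ] H) (hB : IsSelfAdjoint B)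
    (hAB : A * B = -B * A)
    (hdisj : Disjoint (spectrum ℝ B) (spectrum ℝ (-B))) : A = 0 := by
  have hB' : IsSelfAdjoint (-B) := hB.neg
  set K : Set ℝ := spectrum ℝ B ∪ spectrum ℝ (-B) with hK
  have hKcpt : IsCompact K := (spectrum.isCompact B).union (spectrum.isCompact (-B))
  have : CompactSpace K := isCompact_iff_compactSpace.mp hKcpt
  -- inclusion maps
  have hsub₁ : spectrum ℝ B ⊆ K := Set.subset_union_left
  have hsub₂ : spectrum ℝ (-B) ⊆ K := Set.subset_union_right
  let ι₁ : C(spectrum ℝ B, K) := ⟨Set.inclusion hsub₁, continuous_inclusion hsub₁⟩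
  let ι₂ : C(spectrum ℝ (-B), K) := ⟨Set.inclusion hsub₂, continuous_inclusion hsub₂⟩
  let φ : C(K, ℝ) → (H →L[ℂ] H) := fun f => cfcHom hB (f.comp ι₁)
  let ψ : C(K, ℝ) → (H →L[ℂ] H) := fun f => cfcHom hB' (f.comp ι₂)
  have hφcont : Continuous φ :=
    (cfcHom_isClosedEmbedding hB).continuous.comp (ContinuousMap.continuous_precomp ι₁)
  have hψcont : Continuous ψ :=
    (cfcHom_isClosedEmbedding hB').continuous.comp (ContinuousMap.continuous_precomp ι₂)
  -- the key commutation relation, by Stone–Weierstrass style induction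
  have key : ∀ f : C(K, ℝ), A * φ f = ψ f * A := by
    intro f
    induction f using ContinuousMap.induction_on_of_compact with
    | const r =>
        have h₁ : φ (ContinuousMap.const K r) = algebraMap ℝ _ r := by
          have : (ContinuousMap.const K r).comp ι₁ =
              algebraMap ℝ C(spectrum ℝ B, ℝ) r := by ext x; rfl
          rw [show φ (ContinuousMap.const K r) = cfcHom hB ((ContinuousMap.const K r).comp ι₁) from rfl, this, AlgHomClass.commutes]
        have h₂ : ψ (ContinuousMap.const K r) = algebraMap ℝ _ r := by
          have : (ContinuousMap.const K r).comp ι₂ =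
              algebraMap ℝ C(spectrum ℝ (-B), ℝ) r := by ext x; rfl
          rw [show ψ (ContinuousMap.const K r) = cfcHom hB' ((ContinuousMap.const K r).comp ι₂) from rfl, this, AlgHomClass.commutes]
        rw [h₁, h₂, Algebra.algebraMap_eq_smul_one, smul_mul_assoc, mul_smul_comm,
          one_mul, mul_one]
    | id =>
        have h₁ : φ (ContinuousMap.restrict K (ContinuousMap.id ℝ)) = B := by
          have : (ContinuousMap.restrict K (ContinuousMap.id ℝ)).comp ι₁ =
              ContinuousMap.restrict (spectrum ℝ B) (ContinuousMap.id ℝ) := by ext x; rfl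
          rw [show φ (ContinuousMap.restrict K (ContinuousMap.id ℝ)) =
            cfcHom hB ((ContinuousMap.restrict K (ContinuousMap.id ℝ)).comp ι₁) from rfl,
            this, cfcHom_id hB]
        have h₂ : ψ (ContinuousMap.restrict K (ContinuousMap.id ℝ)) = -B := by
          have : (ContinuousMap.restrict K (ContinuousMap.id ℝ)).comp ι₂ =
              ContinuousMap.restrict (spectrum ℝ (-B)) (ContinuousMap.id ℝ) := by ext x; rfl
          rw [show ψ (ContinuousMap.restrict K (ContinuousMap.id ℝ)) =
            cfcHom hB' ((ContinuousMap.restrict K (ContinuousMap.id ℝ)).comp ι₂) from rfl,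
            this, cfcHom_id hB']
        rw [h₁, h₂]; exact hAB
    | star_id =>
        have hstar : star (ContinuousMap.restrict K (ContinuousMap.id ℝ)) =
            ContinuousMap.restrict K (ContinuousMap.id ℝ) := by
          ext x; simp
        rw [hstar]
        have h₁ : φ (ContinuousMap.restrict K (ContinuousMap.id ℝ)) = B := by
          have : (ContinuousMap.restrict K (ContinuousMap.id ℝ)).comp ι₁ =
              ContinuousMap.restrict (spectrum ℝ B) (ContinuousMap.id ℝ) := by ext x; rfl
          rw [show φ (ContinuousMap.restrict K (ContinuousMap.id ℝ)) =
            cfcHom hB ((ContinuousMap.restrict K (ContinuousMap.id ℝ)).comp ι₁) from rfl,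
            this, cfcHom_id hB]
        have h₂ : ψ (ContinuousMap.restrict K (ContinuousMap.id ℝ)) = -B := by
          have : (ContinuousMap.restrict K (ContinuousMap.id ℝ)).comp ι₂ =
              ContinuousMap.restrict (spectrum ℝ (-B)) (ContinuousMap.id ℝ) := by ext x; rfl
          rw [show ψ (ContinuousMap.restrict K (ContinuousMap.id ℝ)) =
            cfcHom hB' ((ContinuousMap.restrict K (ContinuousMap.id ℝ)).comp ι₂) from rfl,
            this, cfcHom_id hB']
        rw [h₁, h₂]; exact hAB
    | add f g hf hg =>
        have hφ : φ (f + g) = φ f + φ g := by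
          have : (f + g).comp ι₁ = f.comp ι₁ + g.comp ι₁ := by ext x; rfl
          simp only [φ, this, map_add]
        have hψ : ψ (f + g) = ψ f + ψ g := by
          have : (f + g).comp ι₂ = f.comp ι₂ + g.comp ι₂ := by ext x; rfl
          simp only [ψ, this, map_add]
        rw [hφ, hψ, mul_add, add_mul, hf, hg]
    | mul f g hf hg =>
        have hφ : φ (f * g) = φ f * φ g := by
          have : (f * g).comp ι₁ = f.comp ι₁ * g.comp ι₁ := by ext x; rfl
          simp only [φ, this, map_mul]
        have hψ : ψ (f * g) = ψ f * ψ g := by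
          have : (f * g).comp ι₂ = f.comp ι₂ * g.comp ι₂ := by ext x; rfl
          simp only [ψ, this, map_mul]
        rw [hφ, hψ, ← mul_assoc, hf, mul_assoc, hg, ← mul_assoc]
    | frequently f hf =>
        have hclosed : IsClosed {g : C(K, ℝ) | A * φ g = ψ g * A} :=
          isClosed_eq (continuous_const.mul hφcont) (hψcont.mul continuous_const)
        exact hclosed.closure_subset (mem_closure_iff_frequently.mpr hf)
  -- Urysohn function: 0 on spectrum of -B, 1 on spectrum of B
  obtain ⟨F, hF0, hF1, -⟩ := exists_continuous_zero_one_of_isClosed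
    (spectrum.isClosed (-B)) (spectrum.isClosed B) hdisj.symm
  have hkey := key (F.restrict K)
  have h₁ : φ (F.restrict K) = 1 := by
    have hc : ((F.restrict K).comp ι₁ : C(spectrum ℝ B, ℝ)) =
        (ContinuousMap.const _ (1 : ℝ)) := by
      ext x
      exact hF1 x.2
    rw [show φ (F.restrict K) = cfcHom hB ((F.restrict K).comp ι₁) from rfl, hc]
    have : (ContinuousMap.const (spectrum ℝ B) (1 : ℝ)) = 1 := rfl
    rw [this, map_one]
  have h₂ : ψ (F.restrict K) = 0 := by
    have hc : ((F.restrict K).comp ι₂ : C(spectrum ℝ (-B), ℝ)) = 0 := by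
      ext x
      exact hF0 x.2
    rw [show ψ (F.restrict K) = cfcHom hB' ((F.restrict K).comp ι₂) from rfl, hc, map_zero]
  rw [h₁, h₂, mul_one, zero_mul] at hkey
  exact hkey

end Aux

open ContinuousLinearMap in
theorem sq_root_skewAdjoint_of_spectrum_im_disjoint
    {H : Type*} [NormedAddCommGroup H] [InnerProductSpace ℂ H] [CompleteSpace H]
    (T A B C : H →L[ℂ] H) (hA : IsSelfAdjoint A) (hB : IsSelfAdjoint B)
    (hC : IsSelfAdjoint C) (hT : T = A + Complex.I • B) (hsq : T ^ 2 = C)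
    (hspec : spectrum ℂ B ∩ spectrum ℂ (-B) = ∅) :
    ContinuousLinearMap.adjoint T = -T ∧ IsUnit T ∧ T = Complex.I • B := by
  -- star T = A - I • B
  have hstarT : star T = A + (-Complex.I) • B := by
    rw [hT, star_add, star_smul, hA.star_eq, hB.star_eq, Complex.star_def, Complex.conj_I]
  -- (star T)^2 = T^2
  have hsq' : (star T) ^ 2 = T ^ 2 := by
    rw [← star_pow, hsq, hC.star_eq]
  -- expand both squares
  have expand : ∀ c : ℂ, (A + c • B) ^ 2 =
      A * A + c • (A * B) + c • (B * A) + (c * c) • (B * B) := by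
    intro c
    rw [sq]
    simp only [add_mul, mul_add, smul_mul_assoc, mul_smul_comm, smul_add, smul_smul]
    abel
  have hAB : A * B + B * A = 0 := by
    have h2 : ((2 : ℂ) * Complex.I) • (A * B + B * A) = T ^ 2 - (star T) ^ 2 := by
      rw [hstarT, hT, expand, expand]
      module
    rw [hsq', sub_self] at h2
    have h2ne : (2 : ℂ) * Complex.I ≠ 0 := by simp [Complex.I_ne_zero]
    rcases smul_eq_zero.mp h2 with h | h
    · exact absurd h h2ne
    · exact h
  have hABneg : A * B = -B * A := by
    have := hAB
    rw [add_eq_zero_iff_eq_neg] at this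
    rw [this, neg_mul]
  -- disjointness of real spectra
  have hdisj : Disjoint (spectrum ℝ B) (spectrum ℝ (-B)) := by
    rw [Set.disjoint_iff_inter_eq_empty]
    rw [Set.eq_empty_iff_forall_notMem]
    rintro x ⟨hx₁, hx₂⟩
    have h₁ : (x : ℂ) ∈ spectrum ℂ B := by
      have := spectrum.algebraMap_mem ℂ hx₁
      simpa using this
    have h₂ : (x : ℂ) ∈ spectrum ℂ (-B) := by
      have := spectrum.algebraMap_mem ℂ hx₂
      simpa using this
    have : (x : ℂ) ∈ spectrum ℂ B ∩ spectrum ℂ (-B) := ⟨h₁, h₂⟩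
    rw [hspec] at this
    exact this
  have hA0 : A = 0 := aux_eq_zero_of_intertwine A B hB hABneg hdisj
  have hTiB : T = Complex.I • B := by rw [hT, hA0, zero_add]
  -- B is a unit
  have hBunit : IsUnit B := by
    rw [← spectrum.zero_notMem_iff (R := ℂ)]
    intro h0
    have h0' : (0 : ℂ) ∈ spectrum ℂ (-B) := by
      rw [← spectrum.neg_eq]
      simpa using h0
    have : (0 : ℂ) ∈ spectrum ℂ B ∩ spectrum ℂ (-B) := ⟨h0, h0'⟩
    rw [hspec] at this
    exact this
  have hTunit : IsUnit T := by
    rw [hTiB]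
    have hI : IsUnit (algebraMap ℂ (H →L[ℂ] H) Complex.I) :=
      (Complex.I_ne_zero.isUnit).map (algebraMap ℂ (H →L[ℂ] H))
    have := hI.mul hBunit
    rwa [Algebra.algebraMap_eq_smul_one, smul_mul_assoc, one_mul] at this
  refine ⟨?_, hTunit, hTiB⟩
  rw [← star_eq_adjoint, hTiB, star_smul, hB.star_eq, Complex.star_def, Complex.conj_I,
    neg_smul]
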